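/- The relator of G_{1,r}, namely the element [x, y x^r y^{-2} x^r y] of the free group F_2 = ⟨x,y⟩, is congruent modulo γ_5(F_2) to [y,x,y,x]^r [y,x,x,x]^{-r^2}. -/

import Mathlib

/- STATEMENT 12: In `F₂ = ⟨x,y⟩`, the relator `[x, y x^r y⁻² x^r y]` of `G_{1,r}` is
   congruent modulo `γ₅(F₂) = lowerCentralSeries F₂ 4` to
   `[y,x,y,x]^r [y,x,x,x]^{-r²}` (left-normalized commutators, `[a,b] = a⁻¹b⁻¹ab`). -/


namespace Aux
variable {G : Type*} [Group G]

def cc (a b : G) : G := a⁻¹ * b⁻¹ * a * b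

lemma cc_one_left (b : G) : cc (1:G) b = 1 := by unfold cc; group
lemma cc_one_right (u : G) : cc u (1:G) = 1 := by unfold cc; group
lemma cc_mul_right (u g h : G) : cc u (g*h) = cc u h * cc u g * cc (cc u g) h := by
  unfold cc; group
lemma cc_mul_left (g h v : G) : cc (g*h) v = cc g v * cc (cc g v) h * cc h v := by
  unfold cc; group
lemma cc_inv_left (u v : G) : cc u⁻¹ v = (cc u v)⁻¹ * cc ((cc u v)⁻¹) u⁻¹ := by
  unfold cc; group
lemma cc_inv_right (u v : G) : cc u v⁻¹ = (cc u v)⁻¹ * cc ((cc u v)⁻¹) v⁻¹ := by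
  unfold cc; group
lemma cc_swap (u v : G) : cc u v = (cc v u)⁻¹ := by unfold cc; group
lemma cc_self_pow (u : G) (n : ℕ) : cc u (u^n) = 1 := by unfold cc; group
lemma mul_comm_of {u v : G} (h : cc u v = 1) : u * v = v * u := by
  calc u * v = v * u * cc u v := by unfold cc; group
  _ = v * u := by rw [h, mul_one]
lemma cc_mem {i j : ℕ} {u v : G} (hu : u ∈ (⊤ : Subgroup G).lowerCentralSeries i)
    (hv : v ∈ (⊤ : Subgroup G).lowerCentralSeries j) :
    cc u v ∈ ⁅(⊤ : Subgroup G).lowerCentralSeries i, (⊤ : Subgroup G).lowerCentralSeries j⁆ := by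
  open scoped commutatorElement in
  have : cc u v = ⁅u⁻¹, v⁻¹⁆ := by unfold cc; rw [commutatorElement_def]; group
  rw [this]
  exact Subgroup.commutator_mem_commutator (inv_mem hu) (inv_mem hv)

lemma lcs_map_surj {H : Type*} [Group H] (f : G →* H) (hf : Function.Surjective f) :
    ∀ n, ((⊤ : Subgroup G).lowerCentralSeries n).map f = (⊤ : Subgroup H).lowerCentralSeries n
  | 0 => by simpa using Subgroup.map_top_of_surjective f hf
  | (n+1) => by
      show Subgroup.map f ⁅(⊤ : Subgroup G).lowerCentralSeries n, ⊤⁆ = ⁅(⊤ : Subgroup H).lowerCentralSeries n, ⊤⁆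
      rw [Subgroup.map_commutator, lcs_map_surj f hf n, Subgroup.map_top_of_surjective f hf]

lemma lcs_comm : ∀ (m : ℕ) {G : Type} [Group G] (n : ℕ),
    ⁅(⊤ : Subgroup G).lowerCentralSeries n, (⊤ : Subgroup G).lowerCentralSeries m⁆ ≤ (⊤ : Subgroup G).lowerCentralSeries (n+m+1)
  | 0, G, _, n => by
      show ⁅(⊤ : Subgroup G).lowerCentralSeries n, ⊤⁆ ≤ (⊤ : Subgroup G).lowerCentralSeries (n+1)
      exact le_of_eq rfl
  | (m+1), G, _, n => by
      set N := (⊤ : Subgroup G).lowerCentralSeries (n+(m+1)+1) with hN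
      have : ∀ g ∈ ⁅(⊤ : Subgroup G).lowerCentralSeries n, (⊤ : Subgroup G).lowerCentralSeries (m+1)⁆, g ∈ N := by
        intro g hg
        let π := QuotientGroup.mk' N
        have hsurj : Function.Surjective π := QuotientGroup.mk'_surjective N
        have hmapbot : Subgroup.map π N = ⊥ :=
          (Subgroup.map_eq_bot_iff _).mpr (le_of_eq (QuotientGroup.ker_mk' N).symm)
        have hQbot : (⊤ : Subgroup (G ⧸ N)).lowerCentralSeries (n+(m+1)+1) = ⊥ := by
          rw [← lcs_map_surj π hsurj, ← hN, hmapbot]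
        have h1 : ⁅⁅(⊤ : Subgroup (G ⧸ N)), (⊤ : Subgroup (G ⧸ N)).lowerCentralSeries n⁆,
            (⊤ : Subgroup (G ⧸ N)).lowerCentralSeries m⁆ = ⊥ := by
          rw [Subgroup.commutator_comm (⊤ : Subgroup (G ⧸ N))]
          have : ⁅(⊤ : Subgroup (G ⧸ N)).lowerCentralSeries n, (⊤ : Subgroup (G ⧸ N))⁆
              = (⊤ : Subgroup (G ⧸ N)).lowerCentralSeries (n+1) := rfl
          rw [this]
          refine le_bot_iff.mp ?_
          calc ⁅(⊤ : Subgroup (G ⧸ N)).lowerCentralSeries (n+1), (⊤ : Subgroup (G ⧸ N)).lowerCentralSeries m⁆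
              ≤ (⊤ : Subgroup (G ⧸ N)).lowerCentralSeries ((n+1)+m+1) := lcs_comm m (n+1)
            _ = ⊥ := by rw [show (n+1)+m+1 = n+(m+1)+1 by ring, hQbot]
        have h2 : ⁅⁅(⊤ : Subgroup (G ⧸ N)).lowerCentralSeries n, (⊤ : Subgroup (G ⧸ N)).lowerCentralSeries m⁆,
            (⊤ : Subgroup (G ⧸ N))⁆ = ⊥ := by
          refine le_bot_iff.mp ?_
          calc ⁅⁅(⊤ : Subgroup (G ⧸ N)).lowerCentralSeries n, (⊤ : Subgroup (G ⧸ N)).lowerCentralSeries m⁆, (⊤ : Subgroup (G ⧸ N))⁆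
              ≤ ⁅(⊤ : Subgroup (G ⧸ N)).lowerCentralSeries (n+m+1), (⊤ : Subgroup (G ⧸ N))⁆ :=
                Subgroup.commutator_mono (lcs_comm m n) le_rfl
            _ = (⊤ : Subgroup (G ⧸ N)).lowerCentralSeries (n+m+1+1) := rfl
            _ = ⊥ := by rw [show n+m+1+1 = n+(m+1)+1 by ring, hQbot]
        have h3 : ⁅⁅(⊤ : Subgroup (G ⧸ N)).lowerCentralSeries m, (⊤ : Subgroup (G ⧸ N))⁆,
            (⊤ : Subgroup (G ⧸ N)).lowerCentralSeries n⁆ = ⊥ := by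
          apply Subgroup.commutator_commutator_eq_bot_of_rotate
          · exact h1
          · exact h2
        have hQ : ⁅(⊤ : Subgroup (G ⧸ N)).lowerCentralSeries n, (⊤ : Subgroup (G ⧸ N)).lowerCentralSeries (m+1)⁆ = ⊥ := by
          have : (⊤ : Subgroup (G ⧸ N)).lowerCentralSeries (m+1)
              = ⁅(⊤ : Subgroup (G ⧸ N)).lowerCentralSeries m, (⊤ : Subgroup (G ⧸ N))⁆ := rfl
          rw [this, Subgroup.commutator_comm]
          exact h3
        have hmap : Subgroup.map π ⁅(⊤ : Subgroup G).lowerCentralSeries n, (⊤ : Subgroup G).lowerCentralSeries (m+1)⁆ = ⊥ := by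
          rw [Subgroup.map_commutator, lcs_map_surj π hsurj, lcs_map_surj π hsurj, hQ]
        have := (Subgroup.map_eq_bot_iff _).mp hmap
        rw [QuotientGroup.ker_mk'] at this
        exact this hg
      exact this

section QSec
variable {Q : Type} [Group Q]

lemma mem_g0 (g : Q) : g ∈ (⊤ : Subgroup Q).lowerCentralSeries 0 := Subgroup.mem_top g

lemma mem_cc (i j : ℕ) {u v : Q} (hu : u ∈ (⊤ : Subgroup Q).lowerCentralSeries i)
    (hv : v ∈ (⊤ : Subgroup Q).lowerCentralSeries j) : cc u v ∈ (⊤ : Subgroup Q).lowerCentralSeries (i+j+1) :=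
  lcs_comm j i (cc_mem hu hv)

variable (hQ : (⊤ : Subgroup Q).lowerCentralSeries 4 = ⊥)
include hQ

lemma kill (i j : ℕ) (h : 3 ≤ i + j) {u v : Q} (hu : u ∈ (⊤ : Subgroup Q).lowerCentralSeries i)
    (hv : v ∈ (⊤ : Subgroup Q).lowerCentralSeries j) : cc u v = 1 := by
  have h1 : cc u v ∈ (⊤ : Subgroup Q).lowerCentralSeries (i+j+1) := mem_cc i j hu hv
  have h2 : (⊤ : Subgroup Q).lowerCentralSeries (i+j+1) ≤ (⊤ : Subgroup Q).lowerCentralSeries 4 :=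
    lowerCentralSeries_antitone _ (by omega)
  rw [hQ] at h2
  simpa using h2 h1

lemma commute_of_kill (i j : ℕ) (h : 3 ≤ i + j) {u v : Q} (hu : u ∈ (⊤ : Subgroup Q).lowerCentralSeries i)
    (hv : v ∈ (⊤ : Subgroup Q).lowerCentralSeries j) : Commute u v :=
  mul_comm_of (kill hQ i j h hu hv)

lemma pow_right_of_g2 {u : Q} (hu : u ∈ (⊤ : Subgroup Q).lowerCentralSeries 2) (g : Q) (n : ℕ) :
    cc u (g^n) = (cc u g)^n := by
  induction n with
  | zero => simp [cc_one_right]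
  | succ n ih =>
      have m1 : cc u (g^n) ∈ (⊤ : Subgroup Q).lowerCentralSeries 3 := mem_cc 2 0 hu (mem_g0 (g^n))
      have k1 : cc (cc u (g^n)) g = 1 := kill hQ 3 0 (by omega) m1 (mem_g0 g)
      rw [pow_succ, cc_mul_right, k1, mul_one, ih, pow_succ']

lemma pow_right_g2 {v : Q} (hv : v ∈ (⊤ : Subgroup Q).lowerCentralSeries 2) (g : Q) (n : ℕ) :
    cc g (v^n) = (cc g v)^n := by
  induction n with
  | zero => simp [cc_one_right]
  | succ n ih =>
      have m1 : cc g (v^n) ∈ (⊤ : Subgroup Q).lowerCentralSeries 3 := mem_cc 0 2 (mem_g0 g) (pow_mem hv n)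
      have k1 : cc (cc g (v^n)) v = 1 := kill hQ 3 2 (by omega) m1 hv
      rw [pow_succ, cc_mul_right, k1, mul_one, ih, pow_succ']

lemma pow_left_g2 {v : Q} (hv : v ∈ (⊤ : Subgroup Q).lowerCentralSeries 2) (g : Q) (n : ℕ) :
    cc (v^n) g = (cc v g)^n := by
  induction n with
  | zero => simp [cc_one_left]
  | succ n ih =>
      have m1 : cc (v^n) g ∈ (⊤ : Subgroup Q).lowerCentralSeries 3 := mem_cc 2 0 (pow_mem hv n) (mem_g0 g)
      have k1 : cc (cc (v^n) g) v = 1 := kill hQ 3 2 (by omega) m1 hv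
      rw [pow_succ, cc_mul_left, k1, mul_one, ih, ← pow_succ]

lemma pow_right_g1 {v : Q} (hv : v ∈ (⊤ : Subgroup Q).lowerCentralSeries 1) (g : Q) (n : ℕ) :
    cc g (v^n) = (cc g v)^n := by
  induction n with
  | zero => simp [cc_one_right]
  | succ n ih =>
      have m1 : cc g (v^n) ∈ (⊤ : Subgroup Q).lowerCentralSeries 2 := mem_cc 0 1 (mem_g0 g) (pow_mem hv n)
      have k1 : cc (cc g (v^n)) v = 1 := kill hQ 2 1 (by omega) m1 hv
      rw [pow_succ, cc_mul_right, k1, mul_one, ih, pow_succ']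

lemma inv_left_g (i : ℕ) (hi : 1 ≤ i) {v : Q} (hv : v ∈ (⊤ : Subgroup Q).lowerCentralSeries i) (g : Q) :
    cc (v⁻¹) g = (cc v g)⁻¹ := by
  have m1 : (cc v g)⁻¹ ∈ (⊤ : Subgroup Q).lowerCentralSeries (i+1) := inv_mem (mem_cc i 0 hv (mem_g0 g))
  have k1 : cc ((cc v g)⁻¹) v⁻¹ = 1 := kill hQ (i+1) i (by omega) m1 (inv_mem hv)
  rw [cc_inv_left, k1, mul_one]

lemma inv_right_g (i : ℕ) (hi : 1 ≤ i) {v : Q} (hv : v ∈ (⊤ : Subgroup Q).lowerCentralSeries i) (g : Q) :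
    cc g (v⁻¹) = (cc g v)⁻¹ := by
  have m0 : cc g v ∈ (⊤ : Subgroup Q).lowerCentralSeries (0+i+1) := mem_cc 0 i (mem_g0 g) hv
  rw [show 0+i+1 = i+1 by omega] at m0
  have m1 : (cc g v)⁻¹ ∈ (⊤ : Subgroup Q).lowerCentralSeries (i+1) := inv_mem m0
  have k1 : cc ((cc g v)⁻¹) v⁻¹ = 1 := kill hQ (i+1) i (by omega) m1 (inv_mem hv)
  rw [cc_inv_right, k1, mul_one]


/-- `[u, X^n] = [u,X]^n [[u,X],X]^(n choose 2)` for `u ∈ γ1`. -/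
lemma g1_pow {u : Q} (hu : u ∈ (⊤ : Subgroup Q).lowerCentralSeries 1)
    (X : Q) (n : ℕ) :
    cc u (X^n) = (cc u X)^n * (cc (cc u X) X)^(n.choose 2) := by
  have hmB : cc u X ∈ (⊤ : Subgroup Q).lowerCentralSeries 2 := mem_cc 1 0 hu (mem_g0 X)
  have hmW : cc (cc u X) X ∈ (⊤ : Subgroup Q).lowerCentralSeries 3 := mem_cc 2 0 hmB (mem_g0 X)
  induction n with
  | zero => simp [cc_one_right]
  | succ n ih =>
      have hBX : cc ((cc u X)^n) X = (cc (cc u X) X)^n := pow_left_g2 hQ hmB X n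
      have k1 : cc ((cc (cc u X) X)^n) ((cc (cc u X) X)^(n.choose 2)) = 1 :=
        kill hQ 3 3 (by omega) (pow_mem hmW n) (pow_mem hmW _)
      have k2 : cc ((cc (cc u X) X)^(n.choose 2)) X = 1 :=
        kill hQ 3 0 (by omega) (pow_mem hmW _) (mem_g0 X)
      rw [pow_succ, cc_mul_right, ih, cc_mul_left, hBX, k1, mul_one, k2, mul_one]
      calc cc u X * ((cc u X)^n * (cc (cc u X) X)^(n.choose 2)) * (cc (cc u X) X)^n
          = (cc u X * (cc u X)^n) * ((cc (cc u X) X)^(n.choose 2) * (cc (cc u X) X)^n) := by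
            group
        _ = (cc u X)^(n+1) * (cc (cc u X) X)^(n.choose 2 + n) := by
            rw [← pow_succ', ← pow_add]
        _ = (cc u X)^(n+1) * (cc (cc u X) X)^((n+1).choose 2) := by
            rw [Nat.choose_succ_succ n 1, Nat.choose_one_right, Nat.add_comm (n.choose 2) n]

/-- main expansion of `[X^n, W]` in a class-4 group. -/
lemma main_pow (X W : Q) (n : ℕ) :
    cc (X^n) W = (cc X W)^n * (cc (cc X W) X)^(n.choose 2)
      * (cc (cc (cc X W) X) X)^(n.choose 3) := by
  have hA1 : cc X W ∈ (⊤ : Subgroup Q).lowerCentralSeries 1 := mem_cc 0 0 (mem_g0 X) (mem_g0 W)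
  have hA2 : cc (cc X W) X ∈ (⊤ : Subgroup Q).lowerCentralSeries 2 := mem_cc 1 0 hA1 (mem_g0 X)
  have hA3 : cc (cc (cc X W) X) X ∈ (⊤ : Subgroup Q).lowerCentralSeries 3 := mem_cc 2 0 hA2 (mem_g0 X)
  have c12 : Commute (cc X W) (cc (cc X W) X) := commute_of_kill hQ 1 2 (by omega) hA1 hA2
  have c13 : Commute (cc X W) (cc (cc (cc X W) X) X) := commute_of_kill hQ 1 3 (by omega) hA1 hA3
  have c23 : Commute (cc (cc X W) X) (cc (cc (cc X W) X) X) :=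
    commute_of_kill hQ 2 3 (by omega) hA2 hA3
  induction n with
  | zero => simp [cc_one_left]
  | succ n ih =>
      rw [pow_succ', cc_mul_left, ih, g1_pow hQ hA1 X n]
      set A1 := cc X W
      set A2 := cc A1 X
      set A3 := cc A2 X
      calc A1 * (A2^n * A3^(n.choose 2)) * (A1^n * A2^(n.choose 2) * A3^(n.choose 3))
          = A1 * A2^n * (A3^(n.choose 2) * A1^n) * A2^(n.choose 2) * A3^(n.choose 3) := by
            group
        _ = A1 * A2^n * (A1^n * A3^(n.choose 2)) * A2^(n.choose 2) * A3^(n.choose 3) := by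
            rw [(c13.symm.pow_pow _ _).eq]
        _ = A1 * (A2^n * A1^n) * A3^(n.choose 2) * A2^(n.choose 2) * A3^(n.choose 3) := by
            group
        _ = A1 * (A1^n * A2^n) * A3^(n.choose 2) * A2^(n.choose 2) * A3^(n.choose 3) := by
            rw [(c12.symm.pow_pow _ _).eq]
        _ = A1 * A1^n * A2^n * (A3^(n.choose 2) * A2^(n.choose 2)) * A3^(n.choose 3) := by
            group
        _ = A1 * A1^n * A2^n * (A2^(n.choose 2) * A3^(n.choose 2)) * A3^(n.choose 3) := by
            rw [(c23.symm.pow_pow _ _).eq]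
        _ = (A1 * A1^n) * (A2^n * A2^(n.choose 2)) * (A3^(n.choose 2) * A3^(n.choose 3)) := by
            group
        _ = A1^(n+1) * A2^(n + n.choose 2) * A3^(n.choose 2 + n.choose 3) := by
            rw [← pow_succ', ← pow_add, ← pow_add]
        _ = A1^(n+1) * A2^((n+1).choose 2) * A3^((n+1).choose 3) := by
            rw [Nat.choose_succ_succ n 1, Nat.choose_one_right, Nat.choose_succ_succ n 2]


/-- L1: `[g, U V W] = [g,V][g,U]` for `U ∈ γ1`, `V ∈ γ2`, `W ∈ γ3`. -/
lemma L1 (g : Q) {U V W : Q} (hU : U ∈ (⊤ : Subgroup Q).lowerCentralSeries 1)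
    (hV : V ∈ (⊤ : Subgroup Q).lowerCentralSeries 2) (hW : W ∈ (⊤ : Subgroup Q).lowerCentralSeries 3) :
    cc g (U * V * W) = cc g V * cc g U := by
  have hUV : U * V ∈ (⊤ : Subgroup Q).lowerCentralSeries 1 :=
    mul_mem hU (lowerCentralSeries_antitone _ (by omega : 1 ≤ 2) hV)
  have k1 : cc g W = 1 := kill hQ 0 3 (by omega) (mem_g0 g) hW
  have k2 : cc (cc g (U * V)) W = 1 :=
    kill hQ 2 3 (by omega) (mem_cc 0 1 (mem_g0 g) hUV) hW
  have k3 : cc (cc g U) V = 1 := kill hQ 2 2 (by omega) (mem_cc 0 1 (mem_g0 g) hU) hV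
  rw [cc_mul_right g (U*V) W, k1, one_mul, k2, mul_one, cc_mul_right g U V, k3, mul_one]

/-- L2: `[g, A⁻¹ M] = [g,M] [g,A]⁻¹` for `A ∈ γ1`, `M ∈ γ2`. -/
lemma L2 (g : Q) {A M : Q} (hA : A ∈ (⊤ : Subgroup Q).lowerCentralSeries 1)
    (hM : M ∈ (⊤ : Subgroup Q).lowerCentralSeries 2) :
    cc g (A⁻¹ * M) = cc g M * (cc g A)⁻¹ := by
  have k1 : cc ((cc g A)⁻¹) M = 1 :=
    kill hQ 2 2 (by omega) (inv_mem (mem_cc 0 1 (mem_g0 g) hA)) hM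
  rw [cc_mul_right g A⁻¹ M, inv_right_g hQ 1 (by omega) hA g, k1, mul_one]

/-- L3: `[A⁻¹ M, g] = [A,g]⁻¹ [M,g]` for `A ∈ γ1`, `M ∈ γ2`. -/
lemma L3 (g : Q) {A M : Q} (hA : A ∈ (⊤ : Subgroup Q).lowerCentralSeries 1)
    (hM : M ∈ (⊤ : Subgroup Q).lowerCentralSeries 2) :
    cc (A⁻¹ * M) g = (cc A g)⁻¹ * cc M g := by
  have k1 : cc ((cc A g)⁻¹) M = 1 :=
    kill hQ 2 2 (by omega) (inv_mem (mem_cc 1 0 hA (mem_g0 g))) hM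
  rw [cc_mul_left A⁻¹ M g, inv_left_g hQ 1 (by omega) hA g, k1, mul_one]

/-- L4: `[g, H N] = [g,H]` for `H ∈ γ2`, `N ∈ γ3`. -/
lemma L4 (g : Q) {H N : Q} (hH : H ∈ (⊤ : Subgroup Q).lowerCentralSeries 2)
    (hN : N ∈ (⊤ : Subgroup Q).lowerCentralSeries 3) :
    cc g (H * N) = cc g H := by
  have k1 : cc g N = 1 := kill hQ 0 3 (by omega) (mem_g0 g) hN
  have k2 : cc (cc g H) N = 1 := kill hQ 3 3 (by omega) (mem_cc 0 2 (mem_g0 g) hH) hN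
  rw [cc_mul_right g H N, k1, one_mul, k2, mul_one]

/-- L5: `[U V W, g] = [W,g]` for `U, V ∈ γ3`, `W ∈ γ2`. -/
lemma L5 (g : Q) {U V W : Q} (hU : U ∈ (⊤ : Subgroup Q).lowerCentralSeries 3)
    (hV : V ∈ (⊤ : Subgroup Q).lowerCentralSeries 3) (hW : W ∈ (⊤ : Subgroup Q).lowerCentralSeries 2) :
    cc (U * V * W) g = cc W g := by
  have hUV : U * V ∈ (⊤ : Subgroup Q).lowerCentralSeries 3 := mul_mem hU hV
  have k1 : cc (U * V) g = 1 := kill hQ 3 0 (by omega) hUV (mem_g0 g)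
  rw [cc_mul_left (U*V) W g, k1, cc_one_left, one_mul, one_mul]

/-- L6: `[g, V⁻¹ N] = [g,V]⁻¹` for `V ∈ γ2`, `N ∈ γ3`. -/
lemma L6 (g : Q) {V N : Q} (hV : V ∈ (⊤ : Subgroup Q).lowerCentralSeries 2)
    (hN : N ∈ (⊤ : Subgroup Q).lowerCentralSeries 3) :
    cc g (V⁻¹ * N) = (cc g V)⁻¹ := by
  have k1 : cc g N = 1 := kill hQ 0 3 (by omega) (mem_g0 g) hN
  have k2 : cc (cc g V⁻¹) N = 1 := by
    rw [inv_right_g hQ 2 (by omega) hV g]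
    exact kill hQ 3 3 (by omega) (inv_mem (mem_cc 0 2 (mem_g0 g) hV)) hN
  rw [cc_mul_right g V⁻¹ N, k1, one_mul, k2, mul_one, inv_right_g hQ 2 (by omega) hV g]


omit hQ in
lemma final_alg {α β K : Q} (cab : Commute α β) (caK : Commute α K) (r c2 rr : ℕ) :
    β^c2 * α^r * (((β⁻¹)^c2 * (K * (α⁻¹)^r)) * (β⁻¹)^rr) = K * (β^rr)⁻¹ := by
  rw [inv_pow, inv_pow, inv_pow]
  rw [(cab.symm.pow_pow c2 r).eq]
  rw [((caK.pow_left r).inv_left.eq).symm]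
  group

lemma tD (X Y : Q) : cc (cc (cc Y X) Y) X = cc X (cc (cc X Y) Y) := by
  have ha : cc X Y ∈ (⊤ : Subgroup Q).lowerCentralSeries 1 := mem_cc 0 0 (mem_g0 X) (mem_g0 Y)
  have hh : cc (cc X Y) Y ∈ (⊤ : Subgroup Q).lowerCentralSeries 2 := mem_cc 1 0 ha (mem_g0 Y)
  rw [cc_swap Y X, inv_left_g hQ 1 (by omega) ha Y, inv_left_g hQ 2 (by omega) hh X,
    cc_swap (cc (cc X Y) Y) X, inv_inv]

lemma tE (X Y : Q) : cc (cc (cc Y X) X) X = cc X (cc (cc X Y) X) := by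
  have ha : cc X Y ∈ (⊤ : Subgroup Q).lowerCentralSeries 1 := mem_cc 0 0 (mem_g0 X) (mem_g0 Y)
  have hb : cc (cc X Y) X ∈ (⊤ : Subgroup Q).lowerCentralSeries 2 := mem_cc 1 0 ha (mem_g0 X)
  rw [cc_swap Y X, inv_left_g hQ 1 (by omega) ha X, inv_left_g hQ 2 (by omega) hb X,
    cc_swap (cc (cc X Y) X) X, inv_inv]

lemma key (X Y : Q) (r : ℕ) :
    cc X (Y * X^r * Y⁻¹ * Y⁻¹ * X^r * Y)
      = (cc X (cc (cc X Y) Y))^r * ((cc X (cc (cc X Y) X))^(r*r))⁻¹ := by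
  have ha : cc X Y ∈ (⊤ : Subgroup Q).lowerCentralSeries 1 := mem_cc 0 0 (mem_g0 X) (mem_g0 Y)
  have hb : cc (cc X Y) X ∈ (⊤ : Subgroup Q).lowerCentralSeries 2 := mem_cc 1 0 ha (mem_g0 X)
  have hh : cc (cc X Y) Y ∈ (⊤ : Subgroup Q).lowerCentralSeries 2 := mem_cc 1 0 ha (mem_g0 Y)
  have hm : cc ((cc X Y)⁻¹) Y⁻¹ ∈ (⊤ : Subgroup Q).lowerCentralSeries 2 :=
    mem_cc 1 0 (inv_mem ha) (mem_g0 Y⁻¹)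
  have hz : cc X Y⁻¹ ∈ (⊤ : Subgroup Q).lowerCentralSeries 1 := mem_cc 0 0 (mem_g0 X) (mem_g0 Y⁻¹)
  have hzb : cc (cc X Y⁻¹) X ∈ (⊤ : Subgroup Q).lowerCentralSeries 2 := mem_cc 1 0 hz (mem_g0 X)
  have hze : cc (cc (cc X Y⁻¹) X) X ∈ (⊤ : Subgroup Q).lowerCentralSeries 3 := mem_cc 2 0 hzb (mem_g0 X)
  have he' : cc (cc (cc X Y) X) X ∈ (⊤ : Subgroup Q).lowerCentralSeries 3 := mem_cc 2 0 hb (mem_g0 X)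
  have hp : cc (X^r) Y⁻¹ ∈ (⊤ : Subgroup Q).lowerCentralSeries 1 := mem_cc 0 0 (mem_g0 (X^r)) (mem_g0 Y⁻¹)
  have hq : cc (X^r) Y ∈ (⊤ : Subgroup Q).lowerCentralSeries 1 := mem_cc 0 0 (mem_g0 (X^r)) (mem_g0 Y)
  have hal : cc X (cc X Y) ∈ (⊤ : Subgroup Q).lowerCentralSeries 2 := mem_cc 0 1 (mem_g0 X) ha
  have hbe : cc X (cc (cc X Y) X) ∈ (⊤ : Subgroup Q).lowerCentralSeries 3 := mem_cc 0 2 (mem_g0 X) hb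
  have hXh : cc X (cc (cc X Y) Y) ∈ (⊤ : Subgroup Q).lowerCentralSeries 3 := mem_cc 0 2 (mem_g0 X) hh
  have hXp : cc X (cc (X^r) Y⁻¹) ∈ (⊤ : Subgroup Q).lowerCentralSeries 2 := mem_cc 0 1 (mem_g0 X) hp
  -- word decomposition
  have hw : Y * X^r * Y⁻¹ * Y⁻¹ * X^r * Y
      = X^r * cc (X^r) Y⁻¹ * X^r * cc (X^r) Y := by simp only [cc]; group
  have h1 : cc X (X^r * cc (X^r) Y⁻¹) = cc X (cc (X^r) Y⁻¹) := by
    rw [cc_mul_right X (X^r) (cc (X^r) Y⁻¹), cc_self_pow, mul_one, cc_one_left, mul_one]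
  have h2 : cc X (X^r * cc (X^r) Y⁻¹ * X^r)
      = cc X (cc (X^r) Y⁻¹) * cc (cc X (cc (X^r) Y⁻¹)) (X^r) := by
    rw [cc_mul_right X (X^r * cc (X^r) Y⁻¹) (X^r), cc_self_pow, one_mul, h1]
  have kcorr : cc (cc X (cc (X^r) Y⁻¹) * cc (cc X (cc (X^r) Y⁻¹)) (X^r)) (cc (X^r) Y) = 1 := by
    apply kill hQ 2 1 (by omega) _ hq
    exact mul_mem hXp (lowerCentralSeries_antitone _ (by omega : (2:ℕ) ≤ 3)
      (mem_cc 2 0 hXp (mem_g0 (X^r))))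
  have h3 : cc X (X^r * cc (X^r) Y⁻¹ * X^r * cc (X^r) Y)
      = cc X (cc (X^r) Y) * (cc X (cc (X^r) Y⁻¹) * cc (cc X (cc (X^r) Y⁻¹)) (X^r)) := by
    rw [cc_mul_right X (X^r * cc (X^r) Y⁻¹ * X^r) (cc (X^r) Y), h2, kcorr, mul_one]
  -- expansions
  have hcxq : cc X (cc (X^r) Y)
      = (cc X (cc (cc X Y) X))^(r.choose 2) * (cc X (cc X Y))^r := by
    rw [main_pow hQ X Y r, L1 hQ X (pow_mem ha r) (pow_mem hb _) (pow_mem he' _),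
      pow_right_g2 hQ hb X (r.choose 2), pow_right_g1 hQ ha X r]
  have hcxp : cc X (cc (X^r) Y⁻¹)
      = (cc X (cc (cc X Y⁻¹) X))^(r.choose 2) * (cc X (cc X Y⁻¹))^r := by
    rw [main_pow hQ X Y⁻¹ r, L1 hQ X (pow_mem hz r) (pow_mem hzb _) (pow_mem hze _),
      pow_right_g2 hQ hzb X (r.choose 2), pow_right_g1 hQ hz X r]
  -- z-reduction
  have hzdef : cc X Y⁻¹ = (cc X Y)⁻¹ * cc ((cc X Y)⁻¹) Y⁻¹ := cc_inv_right X Y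
  have hXz : cc X (cc X Y⁻¹) = cc X (cc ((cc X Y)⁻¹) Y⁻¹) * (cc X (cc X Y))⁻¹ := by
    rw [hzdef]; exact L2 hQ X ha hm
  have hmh : cc ((cc X Y)⁻¹) Y⁻¹
      = cc (cc X Y) Y * cc (cc (cc X Y) Y) ((cc X Y)⁻¹ * Y⁻¹) := by simp only [cc]; group
  have hXmh : cc X (cc ((cc X Y)⁻¹) Y⁻¹) = cc X (cc (cc X Y) Y) := by
    rw [hmh]; exact L4 hQ X hh (mem_cc 2 0 hh (mem_g0 ((cc X Y)⁻¹ * Y⁻¹)))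
  have hXzfull : cc X (cc X Y⁻¹) = cc X (cc (cc X Y) Y) * (cc X (cc X Y))⁻¹ := by
    rw [hXz, hXmh]
  have hzb_eq : cc (cc X Y⁻¹) X
      = (cc (cc X Y) X)⁻¹ * cc (cc ((cc X Y)⁻¹) Y⁻¹) X := by
    rw [hzdef]; exact L3 hQ X ha hm
  have hXzb : cc X (cc (cc X Y⁻¹) X) = (cc X (cc (cc X Y) X))⁻¹ := by
    rw [hzb_eq]; exact L6 hQ X hb (mem_cc 2 0 hm (mem_g0 X))
  -- split the power
  have hsplit : (cc X (cc (cc X Y) Y) * (cc X (cc X Y))⁻¹)^r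
      = (cc X (cc (cc X Y) Y))^r * ((cc X (cc X Y))⁻¹)^r :=
    ((commute_of_kill hQ 3 2 (by omega) hXh hal).inv_right).mul_pow r
  have hcxp2 : cc X (cc (X^r) Y⁻¹)
      = ((cc X (cc (cc X Y) X))⁻¹)^(r.choose 2)
        * ((cc X (cc (cc X Y) Y))^r * ((cc X (cc X Y))⁻¹)^r) := by
    rw [hcxp, hXzb, hXzfull, hsplit]
  -- the extra commutator term
  have ht : cc (cc X (cc (X^r) Y⁻¹)) X = (cc (cc (cc X Y) X) X)^r := by
    rw [hcxp2, ← mul_assoc,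
      L5 hQ X (pow_mem (inv_mem hbe) (r.choose 2)) (pow_mem hXh r) (pow_mem (inv_mem hal) r),
      pow_left_g2 hQ (inv_mem hal) X r]
    congr 1
    have hswap : (cc X (cc X Y))⁻¹ = cc (cc X Y) X := by rw [cc_swap X (cc X Y), inv_inv]
    rw [hswap]
  have hs2 : cc (cc X (cc (X^r) Y⁻¹)) (X^r) = (cc (cc (cc X Y) X) X)^(r*r) := by
    rw [pow_right_of_g2 hQ hXp X r, ht, ← pow_mul]
  -- assemble
  rw [hw, h3, hs2, hcxq, hcxp2, cc_swap (cc (cc X Y) X) X]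
  exact final_alg (commute_of_kill hQ 2 3 (by omega) hal hbe)
    ((commute_of_kill hQ 2 3 (by omega) hal hXh).pow_right r) r (r.choose 2) (r*r)

end QSec
end Aux

namespace Stmt12

abbrev F := FreeGroup (Fin 2)

def x : F := FreeGroup.of 0
def y : F := FreeGroup.of 1

def comm (a b : F) : F := a⁻¹ * b⁻¹ * a * b

/-- The relator `[x, y x^r y⁻² x^r y]`. -/
def C (r : ℕ) : F := comm x (y * x ^ r * y⁻¹ * y⁻¹ * x ^ r * y)

def D : F := comm (comm (comm y x) y) x    -- [y,x,y,x]
def E : F := comm (comm (comm y x) x) x    -- [y,x,x,x]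

theorem relator_mod_gamma5 (r : ℕ) (hr : 0 < r) :
    C r * (D ^ (r : ℤ) * E ^ (-((r : ℤ) ^ 2)))⁻¹ ∈ (⊤ : Subgroup F).lowerCentralSeries 4 := by
  have hQbot : (⊤ : Subgroup (F ⧸ (⊤ : Subgroup F).lowerCentralSeries 4)).lowerCentralSeries 4 = ⊥ := by
    rw [← Aux.lcs_map_surj (QuotientGroup.mk' ((⊤ : Subgroup F).lowerCentralSeries 4))
      (QuotientGroup.mk'_surjective _) 4]
    exact (Subgroup.map_eq_bot_iff _).mpr
      (le_of_eq (QuotientGroup.ker_mk' ((⊤ : Subgroup F).lowerCentralSeries 4)).symm)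
  rw [← QuotientGroup.eq_one_iff, QuotientGroup.mk_mul, QuotientGroup.mk_inv, mul_inv_eq_one,
    QuotientGroup.mk_mul, QuotientGroup.mk_zpow, QuotientGroup.mk_zpow]
  have hcast : (-((r : ℤ)^2)) = -((r*r : ℕ) : ℤ) := by push_cast; ring
  rw [hcast, zpow_neg, zpow_natCast, zpow_natCast]
  show (QuotientGroup.mk' ((⊤ : Subgroup F).lowerCentralSeries 4)) (C r)
      = (QuotientGroup.mk' ((⊤ : Subgroup F).lowerCentralSeries 4)) D ^ r
        * ((QuotientGroup.mk' ((⊤ : Subgroup F).lowerCentralSeries 4)) E ^ (r*r))⁻¹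
  set π := QuotientGroup.mk' ((⊤ : Subgroup F).lowerCentralSeries 4) with hπ
  have hC : π (C r)
      = Aux.cc (π x) (π y * (π x)^r * (π y)⁻¹ * (π y)⁻¹ * (π x)^r * (π y)) := by
    simp only [C, comm, Aux.cc, map_mul, map_inv, map_pow]
  have hD : π D = Aux.cc (Aux.cc (Aux.cc (π y) (π x)) (π y)) (π x) := by
    simp only [D, comm, Aux.cc, map_mul, map_inv]
  have hE : π E = Aux.cc (Aux.cc (Aux.cc (π y) (π x)) (π x)) (π x) := by
    simp only [E, comm, Aux.cc, map_mul, map_inv]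
  rw [hC, hD, hE, Aux.tD hQbot, Aux.tE hQbot, Aux.key hQbot]

end Stmt12
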